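/- The resultant with respect to c of the polynomials 2c⁶ - 2tc⁴ + 3c² - ac³ - tac - a² and 2c⁴ + ac - 1 vanishes if and only if (t, a) satisfies 54a⁴ + (72t - t³)a² - (t⁴ - 16t² + 64) = 0, up to a nonzero constant factor; i.e., the resultant equals a nonzero constant multiple of a power of (54a⁴ + (72t - t³)a² - t⁴ + 16t² - 64). -/

import Mathlib

/-- The Sylvester matrix (with respect to the variable `c`) of the polynomials
`p(c) = 2c⁶ - 2tc⁴ - ac³ + 3c² - tac - a²` and `q(c) = 2c⁴ + ac - 1`,
whose determinant is the resultant `Res_c(p, q)`. -/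
noncomputable def sylvesterPQ (t a : ℝ) : Matrix (Fin 10) (Fin 10) ℝ :=
  !![2, 0, -2*t, -a, 3, -t*a, -a^2, 0, 0, 0;
     0, 2, 0, -2*t, -a, 3, -t*a, -a^2, 0, 0;
     0, 0, 2, 0, -2*t, -a, 3, -t*a, -a^2, 0;
     0, 0, 0, 2, 0, -2*t, -a, 3, -t*a, -a^2;
     2, 0, 0, a, -1, 0, 0, 0, 0, 0;
     0, 2, 0, 0, a, -1, 0, 0, 0, 0;
     0, 0, 2, 0, 0, a, -1, 0, 0, 0;
     0, 0, 0, 2, 0, 0, a, -1, 0, 0;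
     0, 0, 0, 0, 2, 0, 0, a, -1, 0;
     0, 0, 0, 0, 0, 2, 0, 0, a, -1]

variable {R : Type*} [CommRing R]

def sylvesterPQR (t a : R) : Matrix (Fin 10) (Fin 10) R :=
  !![2, 0, -2*t, -a, 3, -t*a, -a^2, 0, 0, 0;
     0, 2, 0, -2*t, -a, 3, -t*a, -a^2, 0, 0;
     0, 0, 2, 0, -2*t, -a, 3, -t*a, -a^2, 0;
     0, 0, 0, 2, 0, -2*t, -a, 3, -t*a, -a^2;
     2, 0, 0, a, -1, 0, 0, 0, 0, 0;
     0, 2, 0, 0, a, -1, 0, 0, 0, 0;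
     0, 0, 2, 0, 0, a, -1, 0, 0, 0;
     0, 0, 0, 2, 0, 0, a, -1, 0, 0;
     0, 0, 0, 0, 2, 0, 0, a, -1, 0;
     0, 0, 0, 0, 0, 2, 0, 0, a, -1]

def EmatR (t a : R) : Matrix (Fin 10) (Fin 10) R :=
  !![1, 0, 0, 0, -1, 0, t, a, -2, 0;
     0, 1, 0, 0, 0, -1, 0, t, a, -2;
     0, 0, 1, 0, 0, 0, -1, 0, t, a;
     0, 0, 0, 1, 0, 0, 0, -1, 0, t;
     0, 0, 0, 0, 1, 0, 0, 0, 0, 0;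
     0, 0, 0, 0, 0, 1, 0, 0, 0, 0;
     0, 0, 0, 0, 0, 0, 1, 0, 0, 0;
     0, 0, 0, 0, 0, 0, 0, 1, 0, 0;
     0, 0, 0, 0, 0, 0, 0, 0, 1, 0;
     0, 0, 0, 0, 0, 0, 0, 0, 0, 1]

def M3R (t a : R) : Matrix (Fin 10) (Fin 10) R :=
  !![0, 0, 0, 0, 0, 0, -t, -3*a, 2, 0;
     0, 0, 0, 0, 0, 0, 0, -t, -3*a, 2;
     0, 0, 0, 0, 0, 0, 4, 0, -t, -a;
     0, 0, 0, 0, 0, 0, -2*a, 4, 0, -(a^2+t);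
     2, 0, 0, a, -1, 0, 0, 0, 0, 0;
     0, 2, 0, 0, a, -1, 0, 0, 0, 0;
     0, 0, 2, 0, 0, a, -1, 0, 0, 0;
     0, 0, 0, 2, 0, 0, a, -1, 0, 0;
     0, 0, 0, 0, 2, 0, 0, a, -1, 0;
     0, 0, 0, 0, 0, 2, 0, 0, a, -1]

def AmatR (a : R) : Matrix (Fin 6) (Fin 6) R :=
  !![2, 0, 0, a, -1, 0; 0, 2, 0, 0, a, -1; 0, 0, 2, 0, 0, a;
     0, 0, 0, 2, 0, 0; 0, 0, 0, 0, 2, 0; 0, 0, 0, 0, 0, 2]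

def BmatR (a : R) : Matrix (Fin 6) (Fin 4) R :=
  !![0, 0, 0, 0; 0, 0, 0, 0; -1, 0, 0, 0; a, -1, 0, 0; 0, a, -1, 0; 0, 0, a, -1]

def DmatR (t a : R) : Matrix (Fin 4) (Fin 4) R :=
  !![-t, -3*a, 2, 0; 0, -t, -3*a, 2; 4, 0, -t, -a; -2*a, 4, 0, -(a^2+t)]

def sigma10 : Equiv.Perm (Fin 10) :=
  ⟨fun i => ![4,5,6,7,8,9,0,1,2,3] i, fun i => ![6,7,8,9,0,1,2,3,4,5] i, by decide, by decide⟩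

def esum64 : Fin 6 ⊕ Fin 4 ≃ Fin 10 :=
  ⟨Sum.elim (fun i => ![0,1,2,3,4,5] i) (fun i => ![6,7,8,9] i),
   fun i => ![.inl 0, .inl 1, .inl 2, .inl 3, .inl 4, .inl 5, .inr 0, .inr 1, .inr 2, .inr 3] i,
   by decide, by decide⟩

set_option maxHeartbeats 1000000 in
lemma EmatR_mul (t a : R) : EmatR t a * sylvesterPQR t a = M3R t a := by
  rw [EmatR, sylvesterPQR, M3R]
  norm_num [Matrix.cons_mul, Matrix.vecMul_cons, Matrix.cons_vecMul,
    Matrix.empty_mul, Matrix.vecMul_empty, Matrix.empty_vecMul, Matrix.smul_cons,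
    Matrix.smul_empty]
  and_intros <;> ring

lemma EmatR_det (t a : R) : (EmatR t a).det = 1 := by
  have h : (EmatR t a).BlockTriangular id := by
    intro i j hij
    fin_cases i <;> fin_cases j <;>
      first
        | rfl
        | exact absurd hij (by decide)
  rw [Matrix.det_of_upperTriangular h]
  norm_num [EmatR, Fin.prod_univ_succ]

lemma AmatR_det (a : R) : (AmatR a).det = 64 := by
  have h : (AmatR a).BlockTriangular id := by
    intro i j hij
    fin_cases i <;> fin_cases j <;>
      first
        | rfl
        | exact absurd hij (by decide)
  rw [Matrix.det_of_upperTriangular h]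
  norm_num [AmatR, Fin.prod_univ_succ]

lemma DmatR_det (t a : R) :
    (DmatR t a).det
      = -(54 * a ^ 4 + (72 * t - t ^ 3) * a ^ 2 - t ^ 4 + 16 * t ^ 2 - 64) := by
  simp [DmatR, Matrix.det_succ_row_zero, Fin.sum_univ_succ, Fin.succAbove]
  ring

lemma M3R_perm (t a : R) :
    (M3R t a).submatrix sigma10 id
      = (Matrix.fromBlocks (AmatR a) (BmatR a) 0 (DmatR t a)).submatrix
          esum64.symm esum64.symm := by
  ext i j
  fin_cases i <;> fin_cases j <;> rfl

lemma sigma10_sign : Equiv.Perm.sign sigma10 = 1 := by decide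

lemma sylvesterPQR_det (t a : R) :
    (sylvesterPQR t a).det
      = -64 * (54 * a ^ 4 + (72 * t - t ^ 3) * a ^ 2 - t ^ 4 + 16 * t ^ 2 - 64) := by
  have h1 : (M3R t a).det = (sylvesterPQR t a).det := by
    have h := Matrix.det_mul (EmatR t a) (sylvesterPQR t a)
    rw [EmatR_mul, EmatR_det, one_mul] at h
    exact h
  have h2 : ((M3R t a).submatrix sigma10 id).det = (M3R t a).det := by
    rw [Matrix.det_permute, sigma10_sign]
    simp
  have h3 : ((M3R t a).submatrix sigma10 id).det
      = (AmatR a).det * (DmatR t a).det := by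
    rw [M3R_perm, Matrix.det_submatrix_equiv_self, Matrix.det_fromBlocks_zero₂₁]
  rw [← h1, ← h2, h3, AmatR_det, DmatR_det]
  ring

/-- The resultant in `c` of `2c⁶ - 2tc⁴ + 3c² - ac³ - tac - a²` and `2c⁴ + ac - 1`
is a nonzero constant multiple of a power of `54a⁴ + (72t - t³)a² - t⁴ + 16t² - 64`;
in particular it vanishes exactly where this quartic in `a` vanishes. -/
theorem resultant_factors :
    ∃ (C : ℝ) (k : ℕ), C ≠ 0 ∧ 0 < k ∧ ∀ t a : ℝ,
      (sylvesterPQ t a).det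
        = C * (54 * a ^ 4 + (72 * t - t ^ 3) * a ^ 2
            - t ^ 4 + 16 * t ^ 2 - 64) ^ k := by
  refine ⟨-64, 1, by norm_num, Nat.one_pos, fun t a => ?_⟩
  have e : sylvesterPQ t a = sylvesterPQR t a := rfl
  rw [pow_one, e]
  exact sylvesterPQR_det t a
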